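/- Let F be a cyclic Minkowski norm on a finite-dimensional real Lie algebra g with spray vector field η and connection operator N, and let y ∈ g∖{0} satisfy g_y([u,v],y) = 0 for all u,v ∈ g. Then η(y) = 0 and N(y,v) = [v,y] for every v ∈ g. -/

import Mathlib

noncomputable section

/-- The fundamental tensor `g_y(u,v) = (1/2)·∂²/∂s∂t|_{s=t=0} F(y+su+tv)²`. -/
def gTensor {V : Type*} [NormedAddCommGroup V] [NormedSpace ℝ V]
    (F : V → ℝ) (y u v : V) : ℝ :=
  (1 / 2) * deriv (fun s : ℝ => deriv (fun t : ℝ => (F (y + s • u + t • v)) ^ 2) 0) 0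

/-- The Cartan tensor `C_y(u,v,w) = (1/2)·d/dt|_{t=0} g_{y+tw}(u,v)`. -/
def cartanTensor {V : Type*} [NormedAddCommGroup V] [NormedSpace ℝ V]
    (F : V → ℝ) (y u v w : V) : ℝ :=
  (1 / 2) * deriv (fun t : ℝ => gTensor F (y + t • w) u v) 0

/-- `F` is a Minkowski norm: positive and smooth away from `0`, positively
homogeneous of degree one, with positive-definite symmetric bilinear fundamental tensor. -/
structure IsMinkowskiNorm {V : Type*} [NormedAddCommGroup V] [NormedSpace ℝ V]
    (F : V → ℝ) : Prop where
  pos : ∀ y : V, y ≠ 0 → 0 < F y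
  smooth : ContDiffOn ℝ (⊤ : ℕ∞) F {(0 : V)}ᶜ
  homog : ∀ c : ℝ, 0 < c → ∀ y : V, F (c • y) = c * F y
  g_symm : ∀ y : V, y ≠ 0 → ∀ u v : V, gTensor F y u v = gTensor F y v u
  g_add_left : ∀ y : V, y ≠ 0 → ∀ u u' v : V,
    gTensor F y (u + u') v = gTensor F y u v + gTensor F y u' v
  g_smul_left : ∀ y : V, y ≠ 0 → ∀ (c : ℝ) (u v : V),
    gTensor F y (c • u) v = c * gTensor F y u v
  g_posdef : ∀ y : V, y ≠ 0 → ∀ u : V, u ≠ 0 → 0 < gTensor F y u u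

/-- A Lie algebra structure on the real vector space `V`, given as a bilinear map. -/
structure IsLieBracket {V : Type*} [AddCommGroup V] [Module ℝ V]
    (L : V →ₗ[ℝ] V →ₗ[ℝ] V) : Prop where
  alternate : ∀ x : V, L x x = 0
  jacobi : ∀ x y z : V, L x (L y z) = L (L x y) z + L y (L x z)

/-- The cyclic condition for a Minkowski norm on a Lie algebra. -/
def IsCyclicNorm {V : Type*} [NormedAddCommGroup V] [NormedSpace ℝ V]
    (L : V →ₗ[ℝ] V →ₗ[ℝ] V) (F : V → ℝ) : Prop :=
  ∀ y : V, y ≠ 0 → ∀ x z : V,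
    gTensor F y (L x y) z + gTensor F y (L y z) x + gTensor F y (L z x) y = 0

/-- The Riemann curvature `R_y(u) = D_η N(y,u) − N(y,N(y,u)) + N(y,[y,u]) − [y,N(y,u)]`. -/
def RiemannCurv {V : Type*} [NormedAddCommGroup V] [NormedSpace ℝ V]
    (L : V →ₗ[ℝ] V →ₗ[ℝ] V) (η : V → V) (N : V → V → V) (y u : V) : V :=
  fderiv ℝ (fun z => N z u) y (η y) - N y (N y u) + N y (L y u) - L y (N y u)

/-- Projection onto `m` along `h` in the decomposition `g = h ⊕ m`. -/
def projTo {V : Type*} [AddCommGroup V] [Module ℝ V] (h m : Submodule ℝ V)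
    (hcompl : IsCompl h m) : V →ₗ[ℝ] m :=
  m.linearProjOfIsCompl h hcompl.symm

/-- The inner product making the basis `e` orthonormal. -/
def basisInner {V : Type*} [AddCommGroup V] [Module ℝ V] {ι : Type*} [Fintype ι]
    (e : Module.Basis ι ℝ V) (x y : V) : ℝ :=
  ∑ k, e.repr x k * e.repr y k


/-- For a cyclic Minkowski norm, if `g_y([g,g],y) = 0` then
`η(y) = 0` and `N(y,v) = [v,y]` for all `v`. -/
theorem cyclic_spray_and_connection
    {g : Type*} [NormedAddCommGroup g] [NormedSpace ℝ g] [FiniteDimensional ℝ g]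
    (L : g →ₗ[ℝ] g →ₗ[ℝ] g) (hL : IsLieBracket L)
    (F : g → ℝ) (hF : IsMinkowskiNorm F) (hcyc : IsCyclicNorm L F)
    (η : g → g) (N : g → g → g)
    (hη : ∀ y : g, y ≠ 0 → ∀ u : g, gTensor F y (η y) u = gTensor F y y (L u y))
    (hN : ∀ y : g, y ≠ 0 → ∀ u v : g,
      2 * gTensor F y (N y v) u =
        gTensor F y (L u v) y + gTensor F y (L u y) v + gTensor F y (L v y) u
          - 2 * cartanTensor F y u v (η y))
    (y : g) (hy : y ≠ 0)
    (h0 : ∀ u v : g, gTensor F y (L u v) y = 0) :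
    η y = 0 ∧ ∀ v : g, N y v = L v y := by
  have key : ∀ w : g, (∀ u : g, gTensor F y w u = 0) → w = 0 := by
    intro w hw
    by_contra hw0
    have h1 := hF.g_posdef y hy w hw0
    rw [hw w] at h1
    exact lt_irrefl 0 h1
  have skew : ∀ a b : g, L a b = - L b a := by
    intro a b
    have h := hL.alternate (a + b)
    rw [map_add] at h
    simp only [LinearMap.add_apply, map_add, hL.alternate] at h
    have h2 : L a b + L b a = 0 := by
      have h' := h
      abel_nf at h' ⊢
      exact h'
    exact eq_neg_of_add_eq_zero_left h2
  have heta : η y = 0 := by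
    apply key
    intro u
    rw [hη y hy u, hF.g_symm y hy y (L u y), h0]
  have hcart : ∀ u v : g, cartanTensor F y u v (η y) = 0 := by
    intro u v
    rw [heta]
    simp [cartanTensor]
  refine ⟨heta, fun v => ?_⟩
  have hdiff : ∀ u : g, gTensor F y (N y v - L v y) u = 0 := by
    intro u
    have hNeq := hN y hy u v
    rw [hcart u v, h0 u v] at hNeq
    have hc := hcyc y hy u v
    rw [h0 v u] at hc
    have hyv : L y v = - L v y := skew y v
    have hsw : gTensor F y (L y v) u = - gTensor F y (L v y) u := by
      rw [hyv]
      have := hF.g_smul_left y hy (-1) (L v y) u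
      simpa using this
    have h3 : gTensor F y (L u y) v = gTensor F y (L v y) u := by linarith
    have h4 : gTensor F y (N y v) u = gTensor F y (L v y) u := by linarith
    have hsub : gTensor F y (N y v - L v y) u
        = gTensor F y (N y v) u - gTensor F y (L v y) u := by
      have := hF.g_add_left y hy (N y v) (-(L v y)) u
      have hneg : gTensor F y (-(L v y)) u = - gTensor F y (L v y) u := by
        have := hF.g_smul_left y hy (-1) (L v y) u
        simpa using this
      rw [hneg] at this
      simpa [sub_eq_add_neg] using this
    rw [hsub, h4]
    ring
  have := key _ hdiff
  rw [sub_eq_zero] at this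
  exact this


end
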